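/- arXiv:1706.08031 — 6 statements merged into one kernel-verified Lean document; each statement's English description precedes it below -/
import Mathlib

section
/- Let D ⊆ ℝ^d be a nonempty open set with δ_D(x) → 0 as |x| → ∞ with x ∈ D. Let Ψ : (0,∞) → (0,∞) be increasing, and let Γ : (1,∞) → (0,∞) be non-increasing with lim_{s→∞} Γ(s) = 0. Let p^D : (0,∞) × D × D → (0,∞) be jointly measurable and φ1 : D → (0,∞) be bounded and measurable, and assume: (IU) for every t > 0 there is a constant C_t ≥ 1 with C_t^{−1} φ1(x) φ1(y) ≤ p^D(t,x,y) ≤ C_t φ1(x) φ1(y) for all x, y ∈ D; (Survival lower bound) there exist constants c2, c3, M0 > 0 such that for all t > 0 and all x ∈ D with |x| ≥ M0, ∫_{B(x, δ_D(x))} p^D(t,x,y) dy ≥ c2 exp(−c3 t / Ψ(δ_D(x))); (Off-diagonal upper bound) there exist t0 ∈ (0,1] and c0 > 0 such that for each t ∈ (0, t0] there is a constant C(t) > 0 with p^D(t,x,y) ≤ C(t) Γ(|x−y|) for all x, y ∈ D with |x−y| ≥ c0. Then lim_{x ∈ D, |x| → ∞} Ψ(δ_D(x)) |log Γ(|x|/2)|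 = 0. -/
open MeasureTheory Metric Set Real Filter Topology

noncomputable section

set_option maxHeartbeats 1000000 in
theorem statement6
    (d : ℕ) (hd : 1 ≤ d)
    (D : Set (EuclideanSpace ℝ (Fin d))) (hD : IsOpen D) (hDne : D.Nonempty)
    (hδ0 : ∀ ε > 0, ∃ M : ℝ, ∀ x ∈ D, M ≤ ‖x‖ → Metric.infDist x Dᶜ < ε)
    (Ψ : ℝ → ℝ) (hΨpos : ∀ u > 0, 0 < Ψ u) (hΨmono : MonotoneOn Ψ (Ioi 0))
    (Γ : ℝ → ℝ) (hΓpos : ∀ s > 1, 0 < Γ s) (hΓanti : AntitoneOn Γ (Ioi 1))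
    (hΓ0 : Tendsto Γ atTop (𝓝 0))
    (p : ℝ → EuclideanSpace ℝ (Fin d) → EuclideanSpace ℝ (Fin d) → ℝ)
    (hpmeas : ∀ t > 0, Measurable (Function.uncurry (p t)))
    (hppos : ∀ t > 0, ∀ x ∈ D, ∀ y ∈ D, 0 < p t x y)
    (φ1 : EuclideanSpace ℝ (Fin d) → ℝ)
    (hφmeas : Measurable φ1) (hφpos : ∀ x ∈ D, 0 < φ1 x)
    (hφbdd : ∃ M : ℝ, ∀ x ∈ D, φ1 x ≤ M)
    (hIU : ∀ t > 0, ∃ C ≥ (1 : ℝ), ∀ x ∈ D, ∀ y ∈ D,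
      C⁻¹ * (φ1 x * φ1 y) ≤ p t x y ∧ p t x y ≤ C * (φ1 x * φ1 y))
    (hsurv : ∃ c2 > (0 : ℝ), ∃ c3 > (0 : ℝ), ∃ M0 > (0 : ℝ), ∀ t > 0, ∀ x ∈ D,
      M0 ≤ ‖x‖ →
      c2 * Real.exp (-(c3 * t / Ψ (Metric.infDist x Dᶜ))) ≤
        ∫ y in ball x (Metric.infDist x Dᶜ), p t x y)
    (hoff : ∃ t0 > (0 : ℝ), t0 ≤ 1 ∧ ∃ c0 > (0 : ℝ), ∀ t, 0 < t → t ≤ t0 →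
      ∃ Ct > (0 : ℝ), ∀ x ∈ D, ∀ y ∈ D, c0 ≤ dist x y → p t x y ≤ Ct * Γ (dist x y)) :
    ∀ ε > 0, ∃ M : ℝ, ∀ x ∈ D, M ≤ ‖x‖ →
      Ψ (Metric.infDist x Dᶜ) * |Real.log (Γ (‖x‖ / 2))| < ε := by
  intro ε hε
  obtain ⟨t0, ht0, ht01, c0, hc0, hoffm⟩ := hoff
  obtain ⟨c2, hc2, c3, hc3, M0, hM0, hsurvm⟩ := hsurv
  obtain ⟨z0, hz0⟩ := hDne
  obtain ⟨Mφ0, hMφ0⟩ := hφbdd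
  set Mφ : ℝ := max Mφ0 1 with hMφdef
  have hMφpos : (0:ℝ) < Mφ := lt_of_lt_of_le one_pos (le_max_right _ _)
  have hMφ : ∀ x ∈ D, φ1 x ≤ Mφ := fun x hx => (hMφ0 x hx).trans (le_max_left _ _)
  have hφz0 : 0 < φ1 z0 := hφpos z0 hz0
  set t : ℝ := min t0 (ε / (4 * c3)) with ht_def
  have htpos : 0 < t := lt_min ht0 (by positivity)
  have htle : t ≤ t0 := min_le_left _ _
  have hc3t : c3 * t ≤ ε / 4 := by
    have h := min_le_right t0 (ε / (4 * c3))
    have h2 : c3 * t ≤ c3 * (ε / (4 * c3)) := by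
      apply mul_le_mul_of_nonneg_left _ hc3.le
      rw [ht_def]; exact h
    calc c3 * t ≤ c3 * (ε / (4 * c3)) := h2
      _ = ε / 4 := by field_simp
  obtain ⟨C, hC1, hIUm⟩ := hIU t htpos
  obtain ⟨Ct, hCtpos, hoffc⟩ := hoffm t htpos htle
  have hCpos : 0 < C := lt_of_lt_of_le one_pos hC1
  set V1 : ℝ := (volume (ball (0 : EuclideanSpace ℝ (Fin d)) 1)).toReal with hV1def
  have hV1pos : 0 < V1 := by
    rw [hV1def]
    exact ENNReal.toReal_pos (measure_ball_pos volume _ one_pos).ne' measure_ball_lt_top.ne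
  set A : ℝ := C * Ct / φ1 z0 with hAdef
  have hApos : 0 < A := by rw [hAdef]; positivity
  set K : ℝ := C * Mφ * V1 * A with hKdef
  have hKpos : 0 < K := by rw [hKdef]; positivity
  set L : ℝ := max (Real.log K - Real.log c2) 0 with hLdef
  have hL0 : 0 ≤ L := le_max_right _ _
  have hLge : Real.log K - Real.log c2 ≤ L := le_max_left _ _
  have hev : ∀ᶠ s in atTop, Γ s < Real.exp (-(2*L+1)) :=
    hΓ0.eventually (gt_mem_nhds (Real.exp_pos _))
  obtain ⟨S, hS⟩ := eventually_atTop.mp hev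
  obtain ⟨M1, hM1⟩ := hδ0 1 one_pos
  refine ⟨max (max M0 M1) (max (2*S) (max 4 (2*‖z0‖ + 2*c0))), ?_⟩
  intro x hx hMx
  have hxM0 : M0 ≤ ‖x‖ := le_trans ((le_max_left M0 M1).trans (le_max_left _ _)) hMx
  have hxM1 : M1 ≤ ‖x‖ := le_trans ((le_max_right M0 M1).trans (le_max_left _ _)) hMx
  have hxS : 2*S ≤ ‖x‖ := le_trans ((le_max_left _ _).trans (le_max_right _ _)) hMx
  have hx4 : (4:ℝ) ≤ ‖x‖ :=
    le_trans (((le_max_left 4 (2*‖z0‖ + 2*c0)).trans (le_max_right (2*S) _)).trans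
      (le_max_right _ _)) hMx
  have hxz : 2*‖z0‖ + 2*c0 ≤ ‖x‖ :=
    le_trans (((le_max_right 4 (2*‖z0‖ + 2*c0)).trans (le_max_right (2*S) _)).trans
      (le_max_right _ _)) hMx
  -- δ > 0
  have hδnn : 0 ≤ Metric.infDist x Dᶜ := Metric.infDist_nonneg
  have hδpos : 0 < Metric.infDist x Dᶜ := by
    rcases hδnn.lt_or_eq with h | h
    · exact h
    · exfalso
      have hs := hsurvm t htpos x hx hxM0
      rw [← h] at hs
      rw [Metric.ball_zero, setIntegral_empty] at hs
      have hp := mul_pos hc2 (Real.exp_pos (-(c3 * t / Ψ 0)))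
      linarith
  have hδ1 : Metric.infDist x Dᶜ < 1 := hM1 x hx hxM1
  have hψ : 0 < Ψ (Metric.infDist x Dᶜ) := hΨpos _ hδpos
  -- ball ⊆ D
  have hball : ball x (Metric.infDist x Dᶜ) ⊆ D := by
    intro y hy
    by_contra hyD
    have h1 : Metric.infDist x Dᶜ ≤ dist x y := Metric.infDist_le_dist_of_mem hyD
    rw [mem_ball, dist_comm] at hy
    linarith
  -- Γ facts
  have hγpos : 0 < Γ (‖x‖/2) := hΓpos _ (by linarith)
  have hγlt : Γ (‖x‖/2) < Real.exp (-(2*L+1)) := hS _ (by linarith)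
  have hlogγ : Real.log (Γ (‖x‖/2)) < -(2*L+1) := by
    have h := Real.log_lt_log hγpos hγlt
    rwa [Real.log_exp] at h
  -- dist x z0 facts
  have hz0nn : (0:ℝ) ≤ ‖z0‖ := norm_nonneg _
  have hdistn : ‖x‖ - ‖z0‖ ≤ dist x z0 := by
    rw [dist_eq_norm]; exact norm_sub_norm_le x z0
  have hdist1 : ‖x‖/2 ≤ dist x z0 := by linarith
  have hdistc0 : c0 ≤ dist x z0 := by linarith
  have hΓd : Γ (dist x z0) ≤ Γ (‖x‖/2) :=
    hΓanti (mem_Ioi.mpr (by linarith)) (mem_Ioi.mpr (by linarith)) hdist1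
  -- φ1 x bound
  have h1 := (hIUm x hx z0 hz0).1
  have h2 := hoffc x hx z0 hz0 hdistc0
  have hφx : φ1 x ≤ A * Γ (‖x‖/2) := by
    rw [hAdef, div_mul_eq_mul_div, le_div_iff₀ hφz0]
    have h3 : C⁻¹ * (φ1 x * φ1 z0) ≤ Ct * Γ (‖x‖/2) :=
      h1.trans (h2.trans (mul_le_mul_of_nonneg_left hΓd hCtpos.le))
    calc φ1 x * φ1 z0 = C * (C⁻¹ * (φ1 x * φ1 z0)) := by
          rw [← mul_assoc, mul_inv_cancel₀ hCpos.ne', one_mul]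
      _ ≤ C * (Ct * Γ (‖x‖/2)) := mul_le_mul_of_nonneg_left h3 hCpos.le
      _ = C * Ct * Γ (‖x‖/2) := by ring
  have hφxnn : 0 ≤ φ1 x := (hφpos x hx).le
  -- integral upper bound
  have hIle : (∫ y in ball x (Metric.infDist x Dᶜ), p t x y) ≤ K * Γ (‖x‖/2) := by
    have hbound : ∀ y ∈ ball x (Metric.infDist x Dᶜ),
        ‖p t x y‖ ≤ C * (A * Γ (‖x‖/2)) * Mφ := by
      intro y hy
      have hyD := hball hy
      rw [Real.norm_eq_abs, abs_of_pos (hppos t htpos x hx y hyD)]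
      have h4 := (hIUm x hx y hyD).2
      have h5 := hMφ y hyD
      have h6 : 0 ≤ φ1 y := (hφpos y hyD).le
      have h7 : φ1 x * φ1 y ≤ (A * Γ (‖x‖/2)) * Mφ :=
        mul_le_mul hφx h5 h6 (by positivity)
      calc p t x y ≤ C * (φ1 x * φ1 y) := h4
        _ ≤ C * ((A * Γ (‖x‖/2)) * Mφ) := mul_le_mul_of_nonneg_left h7 hCpos.le
        _ = C * (A * Γ (‖x‖/2)) * Mφ := by ring
    have hmeas : AEStronglyMeasurable (fun y => p t x y)
        (volume.restrict (ball x (Metric.infDist x Dᶜ))) :=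
      ((hpmeas t htpos).of_uncurry_left).aestronglyMeasurable.restrict
    have hnorm := norm_setIntegral_le_of_norm_le_const
      (measure_ball_lt_top (μ := volume) (x := x) (r := Metric.infDist x Dᶜ)) hbound
    have hVle : (volume (ball x (Metric.infDist x Dᶜ))).toReal ≤ V1 := by
      rw [hV1def]
      have ha : volume (ball x (Metric.infDist x Dᶜ)) ≤ volume (ball x 1) :=
        measure_mono (ball_subset_ball hδ1.le)
      have hb : volume (ball x 1) = volume (ball (0 : EuclideanSpace ℝ (Fin d)) 1) :=
        Measure.addHaar_ball_center volume x 1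
      exact ENNReal.toReal_mono measure_ball_lt_top.ne (ha.trans_eq hb)
    have hVnn : 0 ≤ (volume (ball x (Metric.infDist x Dᶜ))).toReal := ENNReal.toReal_nonneg
    have hKey : (∫ y in ball x (Metric.infDist x Dᶜ), p t x y) ≤
        C * (A * Γ (‖x‖/2)) * Mφ * (volume (ball x (Metric.infDist x Dᶜ))).toReal :=
      (le_abs_self _).trans hnorm
    calc (∫ y in ball x (Metric.infDist x Dᶜ), p t x y)
        ≤ C * (A * Γ (‖x‖/2)) * Mφ * (volume (ball x (Metric.infDist x Dᶜ))).toReal := hKey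
      _ ≤ C * (A * Γ (‖x‖/2)) * Mφ * V1 := by
          apply mul_le_mul_of_nonneg_left hVle
          positivity
      _ = K * Γ (‖x‖/2) := by rw [hKdef]; ring
  -- combine
  have hmain : c2 * Real.exp (-(c3 * t / Ψ (Metric.infDist x Dᶜ))) ≤ K * Γ (‖x‖/2) :=
    (hsurvm t htpos x hx hxM0).trans hIle
  have hlog : Real.log c2 + (-(c3 * t / Ψ (Metric.infDist x Dᶜ))) ≤
      Real.log K + Real.log (Γ (‖x‖/2)) := by
    have h := Real.log_le_log (by positivity) hmain
    rwa [Real.log_mul hc2.ne' (Real.exp_pos _).ne', Real.log_exp,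
        Real.log_mul hKpos.ne' hγpos.ne'] at h
  have h4 : -(Real.log (Γ (‖x‖/2))) ≤ L + c3 * t / Ψ (Metric.infDist x Dᶜ) := by linarith
  have h5 : Ψ (Metric.infDist x Dᶜ) * (-(Real.log (Γ (‖x‖/2)))) ≤
      Ψ (Metric.infDist x Dᶜ) * L + c3 * t := by
    have h6 := mul_le_mul_of_nonneg_left h4 hψ.le
    have h7 : Ψ (Metric.infDist x Dᶜ) * (c3 * t / Ψ (Metric.infDist x Dᶜ)) = c3 * t := by
      field_simp
    rw [mul_add, h7] at h6
    exact h6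
  have h8 : 2 * (Ψ (Metric.infDist x Dᶜ) * L) + Ψ (Metric.infDist x Dᶜ) ≤
      Ψ (Metric.infDist x Dᶜ) * (-(Real.log (Γ (‖x‖/2)))) := by
    have h9 : (2*L+1 : ℝ) ≤ -(Real.log (Γ (‖x‖/2))) := by linarith
    calc 2 * (Ψ (Metric.infDist x Dᶜ) * L) + Ψ (Metric.infDist x Dᶜ)
        = Ψ (Metric.infDist x Dᶜ) * (2*L+1) := by ring
      _ ≤ Ψ (Metric.infDist x Dᶜ) * (-(Real.log (Γ (‖x‖/2)))) :=
        mul_le_mul_of_nonneg_left h9 hψ.le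
  have habs : |Real.log (Γ (‖x‖/2))| = -(Real.log (Γ (‖x‖/2))) :=
    abs_of_neg (by linarith)
  rw [habs]
  linarith [h5, h8, hψ, hc3t, hε]
end
end

section
/- Let Φ be strictly increasing with weak scaling exponents in (0,2), let θ > 0, and let f : (0,∞) → (0,∞) be bounded and satisfy f(s) ≤ c2 Φ⁻¹((log s)^{−θ}) for all s ≥ s0, for some constants c2 > 0 and s0 > 1. Then there exist constants c3, c4, s1 > 0 such that f*⁻¹(Φ⁻¹(s)) ≤ c3 exp(c4 s^{−1/θ}) for all 0 < s ≤ s1. -/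
open MeasureTheory Set Real

noncomputable section

/-- Generalized inverse `Φ⁻¹(t) = inf {s > 0 : Φ(s) ≥ t}`. -/
def invFun' (Φ : ℝ → ℝ) (t : ℝ) : ℝ := sInf {s : ℝ | 0 < s ∧ t ≤ Φ s}

/-- `f*(r) = sup_{s ≥ r} f(s)`. -/
def fStar (f : ℝ → ℝ) (r : ℝ) : ℝ := sSup (f '' Ici r)

/-- `f*⁻¹(v) = inf {s > 0 : f*(s) ≤ v}`. -/
def fStarInv (f : ℝ → ℝ) (v : ℝ) : ℝ := sInf {s : ℝ | 0 < s ∧ fStar f s ≤ v}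

theorem statement11
    (Φ : ℝ → ℝ) (hΦpos : ∀ u > 0, 0 < Φ u) (hΦmono : StrictMonoOn Φ (Ioi 0))
    (α1 α2 cL cU : ℝ) (hα1 : 0 < α1) (hα12 : α1 ≤ α2) (hα2 : α2 < 2)
    (hcL : 0 < cL) (hcU : cL ≤ cU)
    (hΦscal : ∀ r R : ℝ, 0 < r → r ≤ R →
      cL * (R / r) ^ α1 ≤ Φ R / Φ r ∧ Φ R / Φ r ≤ cU * (R / r) ^ α2)
    (θ : ℝ) (hθ : 0 < θ)
    (f : ℝ → ℝ) (hfpos : ∀ u > 0, 0 < f u) (hfbdd : ∃ Mf : ℝ, ∀ u > 0, f u ≤ Mf)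
    (c2 s0 : ℝ) (hc2 : 0 < c2) (hs0 : 1 < s0)
    (hf : ∀ s ≥ s0, f s ≤ c2 * invFun' Φ (Real.log s ^ (-θ))) :
    ∃ c3 > (0 : ℝ), ∃ c4 > (0 : ℝ), ∃ s1 > (0 : ℝ), ∀ s : ℝ, 0 < s → s ≤ s1 →
      fStarInv f (invFun' Φ s) ≤ c3 * Real.exp (c4 * s ^ (-(1 / θ))) := by
  have hΦ1 : 0 < Φ 1 := hΦpos 1 one_pos
  have hcU0 : 0 < cU := lt_of_lt_of_le hcL hcU
  set c2' : ℝ := max c2 1 with hc2'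
  have hc2'1 : (1:ℝ) ≤ c2' := le_max_right _ _
  have hc2'0 : (0:ℝ) < c2' := lt_of_lt_of_le one_pos hc2'1
  set K : ℝ := cU * c2' ^ α2 with hKdef
  have hK0 : 0 < K := mul_pos hcU0 (Real.rpow_pos_of_pos hc2'0 _)
  have hθ' : θ ≠ 0 := ne_of_gt hθ
  -- invFun' is nonnegative
  have hinv_nonneg : ∀ t : ℝ, 0 ≤ invFun' Φ t := by
    intro t
    apply Real.sInf_nonneg
    rintro x ⟨hx, -⟩; exact hx.le
  -- the defining set of invFun' is nonempty for positive arguments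
  have hne : ∀ s : ℝ, 0 < s → ∃ w, w ∈ {w : ℝ | 0 < w ∧ s ≤ Φ w} := by
    intro s hs
    set w : ℝ := max 1 ((s / (cL * Φ 1)) ^ (1/α1)) with hw
    have hw1 : (1:ℝ) ≤ w := le_max_left _ _
    have hw0 : (0:ℝ) < w := lt_of_lt_of_le one_pos hw1
    refine ⟨w, hw0, ?_⟩
    have hsc := (hΦscal 1 w one_pos hw1).1
    have hΦw : 0 < Φ w := hΦpos w hw0
    rw [div_one] at hsc
    have h1 : cL * w ^ α1 * Φ 1 ≤ Φ w := (le_div_iff₀ hΦ1).mp hsc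
    have hbase : (0:ℝ) ≤ s / (cL * Φ 1) := by positivity
    have h2 : s / (cL * Φ 1) ≤ w ^ α1 := by
      have h3 : ((s / (cL * Φ 1)) ^ (1/α1)) ^ α1 ≤ w ^ α1 :=
        Real.rpow_le_rpow (Real.rpow_nonneg hbase _) (le_max_right _ _) hα1.le
      rwa [← Real.rpow_mul hbase, one_div_mul_cancel (ne_of_gt hα1), Real.rpow_one] at h3
    have h4 : s ≤ cL * Φ 1 * w ^ α1 := by
      rw [div_le_iff₀ (by positivity)] at h2
      linarith
    nlinarith
  -- key scaling lemma for the generalized inverse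
  have key : ∀ t s : ℝ, 0 < t → K * t ≤ s → c2 * invFun' Φ t ≤ invFun' Φ s := by
    intro t s ht hKts
    have hs : 0 < s := lt_of_lt_of_le (mul_pos hK0 ht) hKts
    obtain ⟨w, hw⟩ := hne s hs
    refine le_csInf ⟨w, hw⟩ ?_
    rintro u ⟨hu0, hsu⟩
    have huc : 0 < u / c2' := div_pos hu0 hc2'0
    have hle : u / c2' ≤ u := div_le_self hu0.le hc2'1
    have hsc := (hΦscal (u/c2') u huc hle).2
    have hΦuc : 0 < Φ (u/c2') := hΦpos _ huc
    have hquot : u / (u / c2') = c2' := by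
      field_simp
    rw [hquot] at hsc
    have h3 : Φ u ≤ K * Φ (u/c2') := by
      rw [div_le_iff₀ hΦuc] at hsc
      calc Φ u ≤ cU * c2' ^ α2 * Φ (u/c2') := hsc
        _ = K * Φ (u/c2') := by rw [hKdef]
    have h2 : t ≤ Φ (u / c2') := by
      have h4 : K * t ≤ K * Φ (u/c2') := le_trans hKts (le_trans hsu h3)
      exact le_of_mul_le_mul_left h4 hK0
    have h5 : invFun' Φ t ≤ u / c2' :=
      csInf_le ⟨0, fun x hx => hx.1.le⟩ ⟨huc, h2⟩
    calc c2 * invFun' Φ t ≤ c2' * invFun' Φ t :=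
          mul_le_mul_of_nonneg_right (le_max_left _ _) (hinv_nonneg t)
      _ ≤ c2' * (u / c2') := mul_le_mul_of_nonneg_left h5 hc2'0.le
      _ = u := by field_simp
  -- choose constants
  refine ⟨s0, lt_trans one_pos hs0, K ^ (1/θ), Real.rpow_pos_of_pos hK0 _, 1, one_pos, ?_⟩
  intro s hs hs1
  set X : ℝ := K ^ (1/θ) * s ^ (-(1/θ)) with hXdef
  have hX0 : 0 < X := mul_pos (Real.rpow_pos_of_pos hK0 _) (Real.rpow_pos_of_pos hs _)
  set r : ℝ := s0 * Real.exp X with hrdef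
  have hs00 : (0:ℝ) < s0 := lt_trans one_pos hs0
  have hr0 : 0 < r := mul_pos hs00 (Real.exp_pos _)
  have hs0r : s0 ≤ r := le_mul_of_one_le_right hs00.le (Real.one_le_exp hX0.le)
  have hmem : 0 < r ∧ fStar f r ≤ invFun' Φ s := by
    refine ⟨hr0, ?_⟩
    apply Real.sSup_le _ (hinv_nonneg s)
    rintro x ⟨u, hu, rfl⟩
    have hus0 : s0 ≤ u := le_trans hs0r hu
    have hu0 : 0 < u := lt_of_lt_of_le hs00 hus0
    have hlog : X ≤ Real.log u := by
      have h1 : Real.log r ≤ Real.log u := Real.log_le_log hr0 hu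
      have hlr : Real.log r = Real.log s0 + X := by
        rw [hrdef, Real.log_mul (ne_of_gt hs00) (Real.exp_ne_zero _), Real.log_exp]
      have hls0 : 0 < Real.log s0 := Real.log_pos hs0
      linarith
    have hlogpos : 0 < Real.log u := lt_of_lt_of_le hX0 hlog
    have ht : (0:ℝ) < Real.log u ^ (-θ) := Real.rpow_pos_of_pos hlogpos _
    have hXpow : X ^ (-θ) = K⁻¹ * s := by
      rw [hXdef, Real.mul_rpow (Real.rpow_pos_of_pos hK0 _).le (Real.rpow_pos_of_pos hs _).le,
          ← Real.rpow_mul hK0.le, ← Real.rpow_mul hs.le,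
          show (1/θ) * (-θ) = -1 by field_simp,
          show (-(1/θ)) * (-θ) = 1 by field_simp,
          Real.rpow_neg_one, Real.rpow_one]
    have hbound : K * Real.log u ^ (-θ) ≤ s := by
      have h1 : Real.log u ^ (-θ) ≤ X ^ (-θ) :=
        Real.rpow_le_rpow_of_nonpos hX0 hlog (by linarith)
      calc K * Real.log u ^ (-θ) ≤ K * X ^ (-θ) :=
            mul_le_mul_of_nonneg_left h1 hK0.le
        _ = K * (K⁻¹ * s) := by rw [hXpow]
        _ = s := by field_simp
    calc f u ≤ c2 * invFun' Φ (Real.log u ^ (-θ)) := hf u hus0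
      _ ≤ invFun' Φ s := key _ _ ht hbound
  exact csInf_le ⟨0, fun x hx => hx.1.le⟩ hmem
end
end

section
/- Let Φ be strictly increasing with weak scaling exponents in (0,2), let θ > 0, and let f : (0,∞) → (0,∞) be bounded and satisfy f(s) ≤ c3 Φ⁻¹(s^{−θ}) for all s ≥ s0, for some constants c3, s0 > 0. Then there exist constants c5, s1 > 0 such that f*⁻¹(Φ⁻¹(s)) ≤ c5 s^{−1/θ} for all 0 < s ≤ s1. -/
open MeasureTheory Set Real

noncomputable section

theorem statement12
    (Φ : ℝ → ℝ) (hΦpos : ∀ u > 0, 0 < Φ u) (hΦmono : StrictMonoOn Φ (Ioi 0))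
    (α1 α2 cL cU : ℝ) (hα1 : 0 < α1) (hα12 : α1 ≤ α2) (hα2 : α2 < 2)
    (hcL : 0 < cL) (hcU : cL ≤ cU)
    (hΦscal : ∀ r R : ℝ, 0 < r → r ≤ R →
      cL * (R / r) ^ α1 ≤ Φ R / Φ r ∧ Φ R / Φ r ≤ cU * (R / r) ^ α2)
    (θ : ℝ) (hθ : 0 < θ)
    (f : ℝ → ℝ) (hfpos : ∀ u > 0, 0 < f u) (hfbdd : ∃ Mf : ℝ, ∀ u > 0, f u ≤ Mf)
    (c3 s0 : ℝ) (hc3 : 0 < c3) (hs0 : 0 < s0)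
    (hf : ∀ s ≥ s0, f s ≤ c3 * invFun' Φ (s ^ (-θ))) :
    ∃ c5 > (0 : ℝ), ∃ s1 > (0 : ℝ), ∀ s : ℝ, 0 < s → s ≤ s1 →
      fStarInv f (invFun' Φ s) ≤ c5 * s ^ (-(1 / θ)) := by
  have hcU0 : 0 < cU := lt_of_lt_of_le hcL hcU
  set C3 : ℝ := max c3 1 with hC3def
  have hC3 : (1:ℝ) ≤ C3 := le_max_right _ _
  have hC30 : (0:ℝ) < C3 := lt_of_lt_of_le one_pos hC3
  have hΦ1 : 0 < Φ 1 := hΦpos 1 one_pos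
  -- the sets defining invFun' are nonempty (Φ is unbounded)
  have hne : ∀ t : ℝ, ({s : ℝ | 0 < s ∧ t ≤ Φ s}).Nonempty := by
    intro t
    have hA0 : 0 < cL * Φ 1 := mul_pos hcL hΦ1
    set B : ℝ := max 1 (t / (cL * Φ 1)) with hB
    have hB1 : (1:ℝ) ≤ B := le_max_left _ _
    have hB0 : (0:ℝ) < B := lt_of_lt_of_le one_pos hB1
    refine ⟨B ^ (1/α1), by positivity, ?_⟩
    have hR1 : (1:ℝ) ≤ B ^ (1/α1) := Real.one_le_rpow hB1 (by positivity)
    have hsc := (hΦscal 1 (B ^ (1/α1)) one_pos hR1).1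
    have hRα : (B ^ (1/α1) / 1) ^ α1 = B := by
      rw [div_one, ← Real.rpow_mul hB0.le, one_div_mul_cancel hα1.ne', Real.rpow_one]
    rw [hRα] at hsc
    have h1 : cL * B * Φ 1 ≤ Φ (B ^ (1/α1)) := by
      have := mul_le_mul_of_nonneg_right hsc hΦ1.le
      rwa [div_mul_cancel₀ _ hΦ1.ne'] at this
    have h2 : t ≤ cL * B * Φ 1 := by
      have hBt : t / (cL * Φ 1) ≤ B := le_max_right _ _
      have := mul_le_mul_of_nonneg_right hBt hA0.le
      calc t = t / (cL * Φ 1) * (cL * Φ 1) := by field_simp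
        _ ≤ B * (cL * Φ 1) := this
        _ = cL * B * Φ 1 := by ring
    linarith
  have hbdd : ∀ t : ℝ, BddBelow {s : ℝ | 0 < s ∧ t ≤ Φ s} :=
    fun t => ⟨0, fun x hx => hx.1.le⟩
  have hinv_nonneg : ∀ t : ℝ, 0 ≤ invFun' Φ t := by
    intro t
    exact Real.sInf_nonneg (fun x hx => hx.1.le)
  have hinv_mono : ∀ t1 t2 : ℝ, t1 ≤ t2 → invFun' Φ t1 ≤ invFun' Φ t2 := by
    intro t1 t2 h
    exact csInf_le_csInf (hbdd t1) (hne t2) (fun x hx => ⟨hx.1, h.trans hx.2⟩)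
  -- key scaling constant
  set ε : ℝ := 1 / (cU * C3 ^ α2) with hεdef
  have hCα : (0:ℝ) < C3 ^ α2 := Real.rpow_pos_of_pos hC30 _
  have hε0 : 0 < ε := by positivity
  -- key lemma: C3 * Φ⁻¹(ε t) ≤ Φ⁻¹(t)
  have hkey : ∀ t : ℝ, C3 * invFun' Φ (ε * t) ≤ invFun' Φ t := by
    intro t
    rw [invFun', invFun']
    apply le_csInf (hne t)
    intro x hx
    obtain ⟨hx0, hxt⟩ := hx
    have hxC0 : 0 < x / C3 := by positivity
    have hxCx : x / C3 ≤ x := by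
      rw [div_le_iff₀ hC30]
      nlinarith
    have hsc := (hΦscal (x / C3) x hxC0 hxCx).2
    have hquot : x / (x / C3) = C3 := by field_simp
    rw [hquot] at hsc
    have hΦxC : 0 < Φ (x / C3) := hΦpos _ hxC0
    have h1 : Φ x ≤ cU * C3 ^ α2 * Φ (x / C3) := by
      have := mul_le_mul_of_nonneg_right hsc hΦxC.le
      rwa [div_mul_cancel₀ _ hΦxC.ne'] at this
    have h2 : ε * t ≤ Φ (x / C3) := by
      calc ε * t ≤ ε * Φ x := mul_le_mul_of_nonneg_left hxt hε0.le
        _ ≤ ε * (cU * C3 ^ α2 * Φ (x / C3)) := mul_le_mul_of_nonneg_left h1 hε0.le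
        _ = Φ (x / C3) := by rw [hεdef]; field_simp
    have h3 : sInf {s : ℝ | 0 < s ∧ ε * t ≤ Φ s} ≤ x / C3 :=
      csInf_le (hbdd _) ⟨hxC0, h2⟩
    calc C3 * sInf {s : ℝ | 0 < s ∧ ε * t ≤ Φ s} ≤ C3 * (x / C3) :=
          mul_le_mul_of_nonneg_left h3 hC30.le
      _ = x := by field_simp
  -- choose constants
  refine ⟨ε ^ (-(1/θ)), Real.rpow_pos_of_pos hε0 _, s0 ^ (-θ) / ε, by positivity, ?_⟩
  intro s hs hss1
  set r : ℝ := (ε * s) ^ (-(1/θ)) with hr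
  have hεs : 0 < ε * s := mul_pos hε0 hs
  have hr0 : 0 < r := Real.rpow_pos_of_pos hεs _
  have hexp : (-(1/θ)) ≤ 0 := by
    have : 0 < 1/θ := by positivity
    linarith
  -- r ≥ s0
  have hrs0 : s0 ≤ r := by
    have h1 : ε * s ≤ s0 ^ (-θ) := by
      have := mul_le_mul_of_nonneg_left hss1 hε0.le
      calc ε * s ≤ ε * (s0 ^ (-θ) / ε) := this
        _ = s0 ^ (-θ) := by field_simp
    have h2 : (s0 ^ (-θ)) ^ (-(1/θ)) ≤ r :=
      Real.rpow_le_rpow_of_nonpos hεs h1 hexp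
    have h3 : (s0 ^ (-θ)) ^ (-(1/θ)) = s0 := by
      rw [← Real.rpow_mul hs0.le, show (-θ) * (-(1/θ)) = 1 by field_simp, Real.rpow_one]
    linarith
  -- r ^ (-θ) = ε * s
  have hrθ : r ^ (-θ) = ε * s := by
    rw [hr, ← Real.rpow_mul hεs.le, show (-(1/θ)) * (-θ) = 1 by field_simp, Real.rpow_one]
  -- fStar f r ≤ invFun' Φ s
  have hfs : fStar f r ≤ invFun' Φ s := by
    rw [fStar]
    apply csSup_le ((nonempty_Ici (a := r)).image f)
    rintro y ⟨u, hu, rfl⟩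
    have hu' : s0 ≤ u := hrs0.trans hu
    have h1 := hf u hu'
    have h2 : u ^ (-θ) ≤ r ^ (-θ) :=
      Real.rpow_le_rpow_of_nonpos hr0 hu (neg_nonpos.mpr hθ.le)
    have h3 : invFun' Φ (u ^ (-θ)) ≤ invFun' Φ (ε * s) := by
      rw [← hrθ]; exact hinv_mono _ _ h2
    calc f u ≤ c3 * invFun' Φ (u ^ (-θ)) := h1
      _ ≤ C3 * invFun' Φ (ε * s) :=
          mul_le_mul (le_max_left _ _) h3 (hinv_nonneg _) hC30.le
      _ ≤ invFun' Φ s := hkey s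
  have hfin : fStarInv f (invFun' Φ s) ≤ r :=
    csInf_le ⟨0, fun x hx => hx.1.le⟩ ⟨hr0, hfs⟩
  have hreq : r = ε ^ (-(1/θ)) * s ^ (-(1/θ)) := Real.mul_rpow hε0.le hs.le
  rw [← hreq]
  exact hfin
end
end

section
/- Let d ≥ 2, let f : (0,∞) → (0,∞) be bounded and continuous, and let D_f be the corresponding horn-shaped region. Then for every x1 > 0 and x = (x1, 0, …, 0) ∈ ℝ^d one has min( x1, inf{ f(s) : s > 0, |s − x1| ≤ f(x1) } ) ≤ δ_{D_f}(x) ≤ min( x1, f(x1) ). -/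
open MeasureTheory Metric Set Real

noncomputable section

/-- The horn-shaped region `D_f ⊆ ℝ^(d+2)` with reference function `f`. -/
def horn (d : ℕ) (f : ℝ → ℝ) : Set (EuclideanSpace ℝ (Fin (d + 2))) :=
  {x | 0 < x 0 ∧ Real.sqrt (∑ i ∈ Finset.univ.erase (0 : Fin (d + 2)), x i ^ 2) < f (x 0)}

theorem statement16
    (d : ℕ)
    (f : ℝ → ℝ) (hfpos : ∀ u > 0, 0 < f u) (hfbdd : ∃ Mf : ℝ, ∀ u > 0, f u ≤ Mf)
    (hfcont : ContinuousOn f (Ioi 0)) :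
    ∀ x1 : ℝ, 0 < x1 →
      min x1 (sInf {v : ℝ | ∃ s : ℝ, 0 < s ∧ |s - x1| ≤ f x1 ∧ v = f s}) ≤
        Metric.infDist (EuclideanSpace.single (0 : Fin (d + 2)) x1) (horn d f)ᶜ ∧
      Metric.infDist (EuclideanSpace.single (0 : Fin (d + 2)) x1) (horn d f)ᶜ ≤
        min x1 (f x1) := by
  intro x1 hx1
  set A : Set ℝ := {v : ℝ | ∃ s : ℝ, 0 < s ∧ |s - x1| ≤ f x1 ∧ v = f s} with hAdef
  set X : EuclideanSpace ℝ (Fin (d + 2)) := EuclideanSpace.single (0 : Fin (d + 2)) x1 with hX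
  have hfx1 : 0 < f x1 := hfpos x1 hx1
  have hfx1A : f x1 ∈ A := ⟨x1, hx1, by simp [le_of_lt hfx1], rfl⟩
  have hAbdd : BddBelow A := by
    refine ⟨0, ?_⟩
    rintro v ⟨s, hs, -, rfl⟩
    exact le_of_lt (hfpos s hs)
  have hInf_le_fx1 : sInf A ≤ f x1 := csInf_le hAbdd hfx1A
  -- the zero vector is in the complement
  have h0mem : (0 : EuclideanSpace ℝ (Fin (d + 2))) ∈ (horn d f)ᶜ := by
    intro h
    exact lt_irrefl 0 h.1
  have hne : ((horn d f)ᶜ).Nonempty := ⟨0, h0mem⟩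
  -- distance formula
  have hdist : ∀ z : EuclideanSpace ℝ (Fin (d + 2)),
      dist X z = Real.sqrt ((x1 - z 0) ^ 2 +
        ∑ i ∈ Finset.univ.erase (0 : Fin (d + 2)), (z i) ^ 2) := by
    intro z
    rw [EuclideanSpace.dist_eq]
    congr 1
    rw [← Finset.add_sum_erase _ _ (Finset.mem_univ (0 : Fin (d + 2)))]
    congr 1
    · rw [Real.dist_eq, sq_abs, hX, EuclideanSpace.single_apply, if_pos rfl]
    · apply Finset.sum_congr rfl
      intro i hi
      rw [Real.dist_eq, sq_abs, hX, EuclideanSpace.single_apply,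
        if_neg (Finset.mem_erase.mp hi).1, zero_sub, neg_sq]
  constructor
  · -- lower bound
    rw [infDist_eq_iInf]
    have : Nonempty ((horn d f)ᶜ : Set _) := hne.to_subtype
    apply le_ciInf
    rintro ⟨z, hz⟩
    by_contra hlt
    push_neg at hlt
    apply hz
    have hS : (0 : ℝ) ≤ ∑ i ∈ Finset.univ.erase (0 : Fin (d + 2)), (z i) ^ 2 :=
      Finset.sum_nonneg fun i _ => sq_nonneg _
    have h1 : |x1 - z 0| ≤ dist X z := by
      rw [hdist z, ← Real.sqrt_sq_eq_abs]
      exact Real.sqrt_le_sqrt (le_add_of_nonneg_right hS)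
    have h2 : Real.sqrt (∑ i ∈ Finset.univ.erase (0 : Fin (d + 2)), (z i) ^ 2) ≤ dist X z := by
      rw [hdist z]
      exact Real.sqrt_le_sqrt (le_add_of_nonneg_left (sq_nonneg _))
    have hmx1 : min x1 (sInf A) ≤ x1 := min_le_left _ _
    have hmA : min x1 (sInf A) ≤ sInf A := min_le_right _ _
    have hz0pos : 0 < z 0 := by
      have : |x1 - z 0| < x1 := lt_of_le_of_lt h1 (lt_of_lt_of_le hlt hmx1)
      have := abs_lt.mp this
      linarith [this.1]
    have hz0A : f (z 0) ∈ A := by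
      refine ⟨z 0, hz0pos, ?_, rfl⟩
      have : |x1 - z 0| ≤ f x1 :=
        le_trans h1 (le_trans (le_of_lt hlt) (le_trans hmA hInf_le_fx1))
      rwa [abs_sub_comm]
    have hInf_le : sInf A ≤ f (z 0) := csInf_le hAbdd hz0A
    refine ⟨hz0pos, ?_⟩
    calc Real.sqrt (∑ i ∈ Finset.univ.erase (0 : Fin (d + 2)), (z i) ^ 2)
        ≤ dist X z := h2
      _ < min x1 (sInf A) := hlt
      _ ≤ sInf A := hmA
      _ ≤ f (z 0) := hInf_le
  · -- upper bound
    apply le_min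
    · have := infDist_le_dist_of_mem (x := X) h0mem
      calc Metric.infDist X (horn d f)ᶜ ≤ dist X 0 := this
        _ = x1 := by
            rw [dist_zero_right, hX, EuclideanSpace.norm_single]
            exact abs_of_pos hx1
    · set Y : EuclideanSpace ℝ (Fin (d + 2)) :=
        X + EuclideanSpace.single (1 : Fin (d + 2)) (f x1) with hY
      have hY0 : Y 0 = x1 := by
        simp [hY, hX, EuclideanSpace.single_apply]
      have hYsum : ∑ i ∈ Finset.univ.erase (0 : Fin (d + 2)), (Y i) ^ 2 = (f x1) ^ 2 := by
        rw [Finset.sum_eq_single_of_mem (1 : Fin (d + 2))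
          (Finset.mem_erase.mpr ⟨by norm_num, Finset.mem_univ _⟩)]
        · simp [hY, hX, EuclideanSpace.single_apply]
        · intro i hi hi1
          have hi0 := (Finset.mem_erase.mp hi).1
          simp [hY, hX, EuclideanSpace.single_apply, hi0, hi1]
      have hYmem : Y ∈ (horn d f)ᶜ := by
        intro h
        have := h.2
        rw [hY0, hYsum, Real.sqrt_sq (le_of_lt hfx1)] at this
        exact lt_irrefl _ this
      have := infDist_le_dist_of_mem (x := X) hYmem
      calc Metric.infDist X (horn d f)ᶜ ≤ dist X Y := this
        _ = f x1 := by
            rw [hY, dist_self_add_right, EuclideanSpace.norm_single]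
            exact abs_of_pos hfx1
end
end

section
/- Let d ≥ 1, let Φ be strictly increasing with weak scaling exponents in (0,2) and Ψ be increasing with positive weak scaling exponents. Let θ1 ≥ θ2 > 0 and let f : (0,∞) → (0,∞) be bounded and continuous with c3 exp(−c4 s^{θ1}) ≤ f(s) ≤ c5 exp(−c6 s^{θ2}) for all s ≥ s0, for some constants c3, c4, c5, c6, s0 > 0. Fix constants C1, C2, C3 > 0 and define F(s) = f*⁻¹(C3 (Φ⁻¹(s) ∧ 1)) and β(s) = C1 (Φ⁻¹(s) ∧ 1)^{−d} Ψ(Φ⁻¹(s) ∧ 1)^{−2} exp{ C1 (1 + F(s)) log( e + F(s) / inf_{C2 ≤ r ≤ F(s)} f(r) ) }. Then there exist constants c7, c8, s1 > 0 such that β(s) ≤ c7 exp( c8 (log(1/s))^{(1+θ1)/θ2} ) for all 0 < s ≤ s1. -/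
open MeasureTheory Set Real

noncomputable section

set_option maxHeartbeats 2000000 in
theorem statement17
    (d : ℕ) (hd : 1 ≤ d)
    (Φ : ℝ → ℝ) (hΦpos : ∀ u > 0, 0 < Φ u) (hΦmono : StrictMonoOn Φ (Ioi 0))
    (α1 α2 cL cU : ℝ) (hα1 : 0 < α1) (hα12 : α1 ≤ α2) (hα2 : α2 < 2)
    (hcL : 0 < cL) (hcU : cL ≤ cU)
    (hΦscal : ∀ r R : ℝ, 0 < r → r ≤ R →
      cL * (R / r) ^ α1 ≤ Φ R / Φ r ∧ Φ R / Φ r ≤ cU * (R / r) ^ α2)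
    (Ψ : ℝ → ℝ) (hΨpos : ∀ u > 0, 0 < Ψ u) (hΨmono : MonotoneOn Ψ (Ioi 0))
    (β1 β2 k1 k2 : ℝ) (hβ1 : 0 < β1) (hβ12 : β1 ≤ β2) (hk1 : 0 < k1) (hk12 : k1 ≤ k2)
    (hΨscal : ∀ r R : ℝ, 0 < r → r ≤ R →
      k1 * (R / r) ^ β1 ≤ Ψ R / Ψ r ∧ Ψ R / Ψ r ≤ k2 * (R / r) ^ β2)
    (θ1 θ2 : ℝ) (hθ2 : 0 < θ2) (hθ12 : θ2 ≤ θ1)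
    (f : ℝ → ℝ) (hfpos : ∀ u > 0, 0 < f u) (hfbdd : ∃ Mf : ℝ, ∀ u > 0, f u ≤ Mf)
    (hfcont : ContinuousOn f (Ioi 0))
    (c3 c4 c5 c6 s0 : ℝ) (hc3 : 0 < c3) (hc4 : 0 < c4) (hc5 : 0 < c5)
    (hc6 : 0 < c6) (hs0 : 0 < s0)
    (hf : ∀ s ≥ s0, c3 * Real.exp (-(c4 * s ^ θ1)) ≤ f s ∧
      f s ≤ c5 * Real.exp (-(c6 * s ^ θ2)))
    (C1 C2 C3 : ℝ) (hC1 : 0 < C1) (hC2 : 0 < C2) (hC3 : 0 < C3) :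
    ∃ c7 > (0 : ℝ), ∃ c8 > (0 : ℝ), ∃ s1 > (0 : ℝ), ∀ s : ℝ, 0 < s → s ≤ s1 →
      C1 * (min (invFun' Φ s) 1)⁻¹ ^ d * (Ψ (min (invFun' Φ s) 1))⁻¹ ^ 2 *
        Real.exp (C1 * (1 + fStarInv f (C3 * min (invFun' Φ s) 1)) *
          Real.log (Real.exp 1 + fStarInv f (C3 * min (invFun' Φ s) 1) /
            sInf (f '' Icc C2 (fStarInv f (C3 * min (invFun' Φ s) 1))))) ≤
      c7 * Real.exp (c8 * Real.log (1 / s) ^ ((1 + θ1) / θ2)) := by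
  have hθ1 : 0 < θ1 := lt_of_lt_of_le hθ2 hθ12
  have hβ2 : 0 < β2 := lt_of_lt_of_le hβ1 hβ12
  have hk2 : 0 < k2 := lt_of_lt_of_le hk1 hk12
  have hΦ1 : 0 < Φ 1 := hΦpos 1 one_pos
  have hΨ1 : 0 < Ψ 1 := hΨpos 1 one_pos
  set a : ℝ := (cL / Φ 1) ^ (1/α1) with ha_def
  have ha : 0 < a := Real.rpow_pos_of_pos (div_pos hcL hΦ1) _
  -- rpow inverse identities
  have hrpinv1 : ∀ x : ℝ, 0 ≤ x → (x ^ α1) ^ (1/α1) = x := by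
    intro x hx
    rw [← Real.rpow_mul hx, mul_one_div, div_self hα1.ne', Real.rpow_one]
  have hrpinv1' : ∀ x : ℝ, 0 ≤ x → (x ^ (1/α1)) ^ α1 = x := by
    intro x hx
    rw [← Real.rpow_mul hx, one_div_mul_cancel hα1.ne', Real.rpow_one]
  have hrpinv2 : ∀ x : ℝ, 0 ≤ x → (x ^ (1/θ2)) ^ θ2 = x := by
    intro x hx
    rw [← Real.rpow_mul hx, one_div_mul_cancel hθ2.ne', Real.rpow_one]
  have hexp_rpow : ∀ x y : ℝ, (Real.exp x) ^ y = Real.exp (x * y) := by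
    intro x y
    rw [Real.rpow_def_of_pos (Real.exp_pos x), Real.log_exp]
  -- min of f on the fixed compact interval
  have hIccsub : Icc C2 (max C2 s0) ⊆ Ioi 0 := fun x hx => lt_of_lt_of_le hC2 hx.1
  obtain ⟨x0, hx0mem, hx0min⟩ := isCompact_Icc.exists_isMinOn
    ⟨C2, left_mem_Icc.2 (le_max_left _ _)⟩ (hfcont.mono hIccsub)
  set m2 : ℝ := min (f x0) c3 with hm2_def
  have hm2 : 0 < m2 := lt_min (hfpos x0 (hIccsub hx0mem)) hc3
  set C5 : ℝ := Real.log (Real.exp 1 + 1/m2) + 1/θ1 + c4 with hC5_def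
  have hlogm2 : (1:ℝ) ≤ Real.log (Real.exp 1 + 1/m2) := by
    have h0 : (0:ℝ) < 1/m2 := div_pos one_pos hm2
    have h := Real.log_le_log (Real.exp_pos 1) (by linarith : Real.exp 1 ≤ Real.exp 1 + 1/m2)
    rwa [Real.log_exp] at h
  have hC5ge1 : 1 ≤ C5 := by
    have h1 : 0 < 1/θ1 := by positivity
    rw [hC5_def]; linarith
  have hC5pos : 0 < C5 := by linarith
  set Cc : ℝ := |Real.log (c5/(C3*a))| + 1/α1 with hCc_def
  have hCc : 0 < Cc := by
    have := abs_nonneg (Real.log (c5/(C3*a)))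
    have : 0 < 1/α1 := by positivity
    rw [hCc_def]; linarith [abs_nonneg (Real.log (c5/(C3*a)))]
  set K : ℝ := 1 + s0 + (Cc/c6) ^ (1/θ2) with hK_def
  have hK1 : 1 ≤ K := by
    have h1 : 0 ≤ (Cc/c6) ^ (1/θ2) := Real.rpow_nonneg (le_of_lt (div_pos hCc hc6)) _
    rw [hK_def]; linarith
  set e0 : ℝ := (1+θ1)/θ2 with he0_def
  have he0 : 1 ≤ e0 := by
    rw [he0_def, le_div_iff₀ hθ2]; linarith
  set c8' : ℝ := C1 * C5 * (2*K) ^ (1+θ1) with hc8'_def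
  have h2K : (0:ℝ) < 2*K := by linarith
  have hc8'pos : 0 < c8' := by
    rw [hc8'_def]
    exact mul_pos (mul_pos hC1 hC5pos) (Real.rpow_pos_of_pos h2K _)
  have hQpos : 0 < (k2/Ψ 1 * a⁻¹ ^ β2)^2 :=
    pow_pos (mul_pos (div_pos hk2 hΨ1) (Real.rpow_pos_of_pos (inv_pos.2 ha) _)) 2
  have hc7pos : 0 < C1 * a⁻¹^d * (k2/Ψ 1 * a⁻¹ ^ β2)^2 :=
    mul_pos (mul_pos hC1 (pow_pos (inv_pos.2 ha) d)) hQpos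
  have hc8pos : 0 < ((d:ℝ) + 2*β2)/α1 + c8' := by
    have : (0:ℝ) < ((d:ℝ) + 2*β2)/α1 :=
      div_pos (by positivity) hα1
    linarith
  refine ⟨C1 * a⁻¹^d * (k2/Ψ 1 * a⁻¹ ^ β2)^2, hc7pos,
    ((d:ℝ) + 2*β2)/α1 + c8', hc8pos,
    min (Real.exp (-1)) (min ((a⁻¹) ^ α1) ((c5/(C3*a)) ^ α1)),
    lt_min (Real.exp_pos _) (lt_min (Real.rpow_pos_of_pos (inv_pos.2 ha) _)
      (Real.rpow_pos_of_pos (div_pos hc5 (mul_pos hC3 ha)) _)), ?_⟩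
  intro s hs hss1
  set L : ℝ := Real.log (1/s) with hL_def
  have hlogs : Real.log s = -L := by rw [hL_def, one_div, Real.log_inv, neg_neg]
  have hL1 : 1 ≤ L := by
    have h1 : s ≤ Real.exp (-1) := le_trans hss1 (min_le_left _ _)
    have h2 := Real.log_le_log hs h1
    rw [Real.log_exp, hlogs] at h2
    linarith
  have hL0 : (0:ℝ) ≤ L := by linarith
  -- basic consequences of smallness of s
  have hs_a : s ^ (1/α1) ≤ a⁻¹ := by
    have h1 : s ≤ (a⁻¹) ^ α1 := le_trans hss1 (le_trans (min_le_right _ _) (min_le_left _ _))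
    calc s ^ (1/α1) ≤ ((a⁻¹)^α1) ^ (1/α1) :=
          Real.rpow_le_rpow hs.le h1 (by positivity)
      _ = a⁻¹ := hrpinv1 _ (by positivity)
  have hs_c5 : s ^ (1/α1) ≤ c5/(C3*a) := by
    have h1 : s ≤ (c5/(C3*a)) ^ α1 := le_trans hss1 (le_trans (min_le_right _ _) (min_le_right _ _))
    have h2 : (0:ℝ) ≤ c5/(C3*a) := le_of_lt (div_pos hc5 (mul_pos hC3 ha))
    calc s ^ (1/α1) ≤ ((c5/(C3*a))^α1) ^ (1/α1) :=
          Real.rpow_le_rpow hs.le h1 (by positivity)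
      _ = c5/(C3*a) := hrpinv1 _ h2
  set w : ℝ := a * s ^ (1/α1) with hw_def
  have hw : 0 < w := mul_pos ha (Real.rpow_pos_of_pos hs _)
  have hwle1 : w ≤ 1 := by
    calc a * s^(1/α1) ≤ a * a⁻¹ := by
          exact mul_le_mul_of_nonneg_left hs_a ha.le
      _ = 1 := mul_inv_cancel₀ ha.ne'
  have hC3w : C3 * w ≤ c5 := by
    calc C3 * (a * s^(1/α1)) ≤ C3 * (a * (c5/(C3*a))) := by
          apply mul_le_mul_of_nonneg_left _ hC3.le
          exact mul_le_mul_of_nonneg_left hs_c5 ha.le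
      _ = c5 := by field_simp [hC3.ne', ha.ne']
  -- lower bound on invFun'
  have hinv_ge : w ≤ invFun' Φ s := by
    rw [invFun']
    apply le_csInf
    · refine ⟨max 1 ((s/(cL * Φ 1)) ^ (1/α1)), lt_of_lt_of_le one_pos (le_max_left _ _), ?_⟩
      set R := max 1 ((s/(cL*Φ 1))^(1/α1)) with hR_def
      have hR1 : (1:ℝ) ≤ R := le_max_left _ _
      have h := (hΦscal 1 R one_pos hR1).1
      rw [div_one] at h
      have hRα : s/(cL*Φ 1) ≤ R ^ α1 := by
        calc s/(cL*Φ 1) = ((s/(cL*Φ 1))^(1/α1))^α1 := (hrpinv1' _ (by positivity)).symm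
          _ ≤ R ^ α1 := Real.rpow_le_rpow (by positivity) (le_max_right _ _) hα1.le
      have h2 : cL * R ^ α1 * Φ 1 ≤ Φ R := by
        rw [← le_div_iff₀ hΦ1]; exact h
      calc s = cL * (s/(cL*Φ 1)) * Φ 1 := by
            field_simp
        _ ≤ cL * R^α1 * Φ 1 := by
            apply mul_le_mul_of_nonneg_right _ hΦ1.le
            exact mul_le_mul_of_nonneg_left hRα hcL.le
        _ ≤ Φ R := h2
    · rintro u ⟨hu, hsu⟩
      rcases le_or_gt 1 u with h1u | hu1
      · exact le_trans hwle1 h1u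
      · have h := (hΦscal u 1 hu hu1.le).1
        have hΦu := hΦpos u hu
        have h' : cL / u ^ α1 ≤ Φ 1 / Φ u := by
          rwa [one_div, Real.inv_rpow hu.le, ← div_eq_mul_inv] at h
        have h'' : cL * Φ u ≤ Φ 1 * u ^ α1 :=
          (div_le_div_iff₀ (Real.rpow_pos_of_pos hu _) hΦu).1 h'
        have h3 : cL * s / Φ 1 ≤ u ^ α1 := by
          rw [div_le_iff₀ hΦ1]
          calc cL * s ≤ cL * Φ u := mul_le_mul_of_nonneg_left hsu hcL.le
            _ ≤ Φ 1 * u ^ α1 := h''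
            _ = u ^ α1 * Φ 1 := mul_comm _ _
        calc w = (cL * s / Φ 1) ^ (1/α1) := by
              rw [hw_def, ha_def, ← Real.mul_rpow (by positivity) hs.le,
                show cL / Φ 1 * s = cL * s / Φ 1 by ring]
          _ ≤ (u ^ α1) ^ (1/α1) := Real.rpow_le_rpow (by positivity) h3 (by positivity)
          _ = u := hrpinv1 u hu.le
  set g : ℝ := min (invFun' Φ s) 1 with hg_def
  have hwg : w ≤ g := le_min hinv_ge hwle1
  have hgpos : 0 < g := lt_of_lt_of_le hw hwg
  have hgle1 : g ≤ 1 := min_le_right _ _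
  -- exponential representations
  have hs_exp : s ^ (1/α1) = Real.exp (-(L/α1)) := by
    rw [Real.rpow_def_of_pos hs, hlogs]
    congr 1; ring
  have hwinv : w⁻¹ = a⁻¹ * Real.exp (L/α1) := by
    rw [hw_def, hs_exp, mul_inv, ← Real.exp_neg, neg_neg]
  have hginvw : g⁻¹ ≤ w⁻¹ := by
    rw [← one_div, ← one_div]
    exact one_div_le_one_div_of_le hw hwg
  have hginv : g⁻¹ ≤ a⁻¹ * Real.exp (L/α1) := hwinv ▸ hginvw
  have hpow_d : g⁻¹ ^ d ≤ a⁻¹ ^ d * Real.exp ((d:ℝ) * (L/α1)) := by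
    calc g⁻¹ ^ d ≤ (a⁻¹ * Real.exp (L/α1)) ^ d :=
        pow_le_pow_left₀ (by positivity) hginv d
      _ = a⁻¹ ^ d * Real.exp ((d:ℝ)*(L/α1)) := by
        rw [mul_pow, ← Real.exp_nat_mul]
  -- Psi bound
  have hΨg : 0 < Ψ g := hΨpos g hgpos
  have hΨinv : (Ψ g)⁻¹ ≤ k2 / Ψ 1 * a⁻¹ ^ β2 * Real.exp (β2 * (L/α1)) := by
    have h := (hΨscal g 1 hgpos hgle1).2
    have h1 : Ψ 1 ≤ k2 * (1/g)^β2 * Ψ g := by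
      rw [← div_le_iff₀ hΨg]; exact h
    have hx : 0 < (1/g)^β2 := Real.rpow_pos_of_pos (by positivity) _
    have h2 : (Ψ g)⁻¹ ≤ k2 * (1/g)^β2 / Ψ 1 := by
      rw [inv_eq_one_div, div_le_div_iff₀ hΨg hΨ1, one_mul]
      exact h1
    have h3 : (1/g) ^ β2 ≤ (1/w) ^ β2 :=
      Real.rpow_le_rpow (by positivity) (one_div_le_one_div_of_le hw hwg) hβ2.le
    have h4 : (1/w) ^ β2 = a⁻¹ ^ β2 * Real.exp (β2 * (L/α1)) := by
      rw [one_div, hwinv, Real.mul_rpow (by positivity) (Real.exp_pos _).le, hexp_rpow,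
        mul_comm (L/α1) β2]
    calc (Ψ g)⁻¹ ≤ k2 * (1/g)^β2 / Ψ 1 := h2
      _ ≤ k2 * (1/w)^β2 / Ψ 1 :=
          div_le_div_of_nonneg_right (mul_le_mul_of_nonneg_left h3 hk2.le) hΨ1.le
      _ = k2 / Ψ 1 * a⁻¹ ^ β2 * Real.exp (β2 * (L/α1)) := by rw [h4]; ring
  have hΨsq : (Ψ g)⁻¹ ^ 2 ≤ (k2 / Ψ 1 * a⁻¹ ^ β2)^2 * Real.exp (β2*(L/α1) + β2*(L/α1)) := by
    calc (Ψ g)⁻¹ ^ 2 ≤ (k2/Ψ 1 * a⁻¹^β2 * Real.exp (β2*(L/α1)))^2 :=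
        pow_le_pow_left₀ (by positivity) hΨinv 2
      _ = (k2 / Ψ 1 * a⁻¹ ^ β2)^2 * Real.exp (β2*(L/α1) + β2*(L/α1)) := by
        rw [mul_pow, pow_two (Real.exp _), ← Real.exp_add]
  -- upper bound on F
  set F : ℝ := fStarInv f (C3 * g) with hF_def
  have hF0 : 0 ≤ F := by
    rw [hF_def]; unfold fStarInv
    exact Real.sInf_nonneg fun x hx => hx.1.le
  have hXlog0 : 0 ≤ Real.log (c5 / (C3 * w)) :=
    Real.log_nonneg ((one_le_div (by positivity)).2 hC3w)
  set X : ℝ := Real.log (c5/(C3*w)) / c6 with hX_def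
  have hX0 : 0 ≤ X := div_nonneg hXlog0 hc6.le
  set r0 : ℝ := max s0 (X ^ (1/θ2)) with hr0_def
  have hr0pos : 0 < r0 := lt_of_lt_of_le hs0 (le_max_left _ _)
  have hr0s0 : s0 ≤ r0 := le_max_left _ _
  have hr0X : X ≤ r0 ^ θ2 := by
    calc X = (X ^ (1/θ2)) ^ θ2 := (hrpinv2 _ hX0).symm
      _ ≤ r0 ^ θ2 := Real.rpow_le_rpow (by positivity) (le_max_right _ _) hθ2.le
  have hFr0 : F ≤ r0 := by
    rw [hF_def]; unfold fStarInv
    apply csInf_le ⟨0, fun x hx => hx.1.le⟩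
    refine ⟨hr0pos, ?_⟩
    unfold fStar
    apply Real.sSup_le _ (by positivity)
    rintro y ⟨u, hu, rfl⟩
    have hus0 : s0 ≤ u := le_trans hr0s0 hu
    have h1 : f u ≤ c5 * Real.exp (-(c6 * u ^ θ2)) := (hf u hus0).2
    have hu2 : X ≤ u ^ θ2 := le_trans hr0X (Real.rpow_le_rpow hr0pos.le hu hθ2.le)
    have hc6X : c6 * X = Real.log (c5/(C3*w)) := by
      rw [hX_def]; field_simp
    have h4 : c5 * Real.exp (-(c6 * X)) = C3 * w := by
      rw [hc6X, Real.exp_neg, Real.exp_log (div_pos hc5 (mul_pos hC3 hw)), inv_div]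
      field_simp
    calc f u ≤ c5 * Real.exp (-(c6*u^θ2)) := h1
      _ ≤ c5 * Real.exp (-(c6*X)) := by
          apply mul_le_mul_of_nonneg_left _ hc5.le
          apply Real.exp_le_exp.2
          have := mul_le_mul_of_nonneg_left hu2 hc6.le
          linarith
      _ = C3 * w := h4
      _ ≤ C3 * g := mul_le_mul_of_nonneg_left hwg hC3.le
  have hXC : X ≤ (Cc / c6) * L := by
    have hC3a : (0:ℝ) < C3 * a := mul_pos hC3 ha
    have hrp : (0:ℝ) < s ^ (1/α1) := Real.rpow_pos_of_pos hs _
    have hlogsplit : Real.log (c5/(C3*w)) = Real.log (c5/(C3*a)) + L/α1 := by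
      rw [hw_def, show c5/(C3*(a*s^(1/α1))) = c5/(C3*a) / s^(1/α1) by
        rw [div_div, mul_assoc]]
      rw [Real.log_div (div_pos hc5 hC3a).ne' hrp.ne', Real.log_rpow hs, hlogs]
      ring
    have habs := le_abs_self (Real.log (c5/(C3*a)))
    have habs0 := abs_nonneg (Real.log (c5/(C3*a)))
    have hCL : Real.log (c5/(C3*a)) + L/α1 ≤ Cc * L := by
      rw [hCc_def]
      have h2 : |Real.log (c5/(C3*a))| * 1 ≤ |Real.log (c5/(C3*a))| * L :=
        mul_le_mul_of_nonneg_left hL1 habs0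
      have h3 : L/α1 = 1/α1 * L := by ring
      rw [add_mul]
      linarith
    rw [hX_def, hlogsplit]
    calc (Real.log (c5/(C3*a)) + L/α1)/c6 ≤ (Cc*L)/c6 :=
        div_le_div_of_nonneg_right hCL hc6.le
      _ = Cc/c6 * L := by ring
  have hLθ : (1:ℝ) ≤ L ^ (1/θ2) := by
    have h := Real.rpow_le_rpow zero_le_one hL1 (by positivity : (0:ℝ) ≤ 1/θ2)
    rwa [Real.one_rpow] at h
  have hLθ0 : (0:ℝ) ≤ L ^ (1/θ2) := by linarith
  have hFW : F ≤ K * L ^ (1/θ2) := by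
    have h1 : X ^ (1/θ2) ≤ (Cc/c6) ^ (1/θ2) * L ^ (1/θ2) := by
      rw [← Real.mul_rpow (le_of_lt (div_pos hCc hc6)) hL0]
      exact Real.rpow_le_rpow hX0 hXC (by positivity)
    have hq0 : (0:ℝ) ≤ (Cc/c6) ^ (1/θ2) := Real.rpow_nonneg (le_of_lt (div_pos hCc hc6)) _
    have h2 : r0 ≤ s0 + X ^ (1/θ2) := by
      apply max_le
      · linarith [Real.rpow_nonneg hX0 (1/θ2)]
      · linarith
    calc F ≤ r0 := hFr0
      _ ≤ s0 + (Cc/c6)^(1/θ2) * L^(1/θ2) := by linarith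
      _ ≤ K * L^(1/θ2) := by
          rw [hK_def, add_mul, add_mul, one_mul]
          linarith [mul_le_mul_of_nonneg_left hLθ hs0.le]
  have hW1 : (1:ℝ) ≤ K * L ^ (1/θ2) := by
    calc (1:ℝ) = 1 * 1 := (one_mul 1).symm
      _ ≤ K * L ^ (1/θ2) := mul_le_mul hK1 hLθ zero_le_one (by linarith)
  -- bound on the log factor
  set m : ℝ := sInf (f '' Icc C2 F) with hm_def
  have hFpos1 : (0:ℝ) < 1 + F := by linarith
  have h1F : (1:ℝ) ≤ (1+F) ^ θ1 := by
    have h := Real.rpow_le_rpow zero_le_one (by linarith : (1:ℝ) ≤ 1 + F) hθ1.le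
    rwa [Real.one_rpow] at h
  have hlogbound : Real.log (Real.exp 1 + F / m) ≤ C5 * (1+F)^θ1 := by
    rcases lt_or_ge F C2 with hFC2 | hFC2
    · rw [hm_def, Icc_eq_empty (not_le.2 hFC2), image_empty, Real.sInf_empty, div_zero,
        add_zero, Real.log_exp]
      have := mul_le_mul_of_nonneg_left h1F (le_trans zero_le_one hC5ge1)
      linarith
    · have hIccne : (Icc C2 F).Nonempty := ⟨C2, left_mem_Icc.2 hFC2⟩
      set μ : ℝ := m2 * Real.exp (-(c4 * F ^ θ1)) with hmu_def
      have hmupos : 0 < μ := mul_pos hm2 (Real.exp_pos _)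
      have hFθ0 : 0 ≤ c4 * F ^ θ1 := mul_nonneg hc4.le (Real.rpow_nonneg hF0 _)
      have hmum : μ ≤ m := by
        rw [hm_def]
        apply le_csInf (hIccne.image f)
        rintro y ⟨r, hr, rfl⟩
        rcases lt_or_ge r s0 with hrs | hrs
        · have hrmem : r ∈ Icc C2 (max C2 s0) := ⟨hr.1, le_max_of_le_right hrs.le⟩
          have hmin := isMinOn_iff.1 hx0min r hrmem
          have hexple : Real.exp (-(c4 * F^θ1)) ≤ 1 := Real.exp_le_one_iff.2 (by linarith)
          calc μ ≤ m2 * 1 := mul_le_mul_of_nonneg_left hexple hm2.le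
            _ = m2 := mul_one _
            _ ≤ f x0 := min_le_left _ _
            _ ≤ f r := hmin
        · have hfr := (hf r hrs).1
          have hrF : r ^ θ1 ≤ F ^ θ1 :=
            Real.rpow_le_rpow (by linarith [hr.1] : (0:ℝ) ≤ r) hr.2 hθ1.le
          calc μ ≤ c3 * Real.exp (-(c4 * F^θ1)) :=
              mul_le_mul_of_nonneg_right (min_le_right _ _) (Real.exp_pos _).le
            _ ≤ c3 * Real.exp (-(c4 * r^θ1)) := by
                apply mul_le_mul_of_nonneg_left _ hc3.le
                apply Real.exp_le_exp.2
                have := mul_le_mul_of_nonneg_left hrF hc4.le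
                linarith
            _ ≤ f r := hfr
      have hmpos : 0 < m := lt_of_lt_of_le hmupos hmum
      have hdiv1 : F / m ≤ F / μ := by
        rw [div_eq_mul_inv, div_eq_mul_inv]
        apply mul_le_mul_of_nonneg_left _ hF0
        rw [← one_div, ← one_div]
        exact one_div_le_one_div_of_le hmupos hmum
      have hdiv2 : F / μ = F / m2 * Real.exp (c4 * F ^ θ1) := by
        rw [hmu_def, Real.exp_neg]
        field_simp
      have hexp1 : 1 ≤ Real.exp (c4 * F^θ1) := Real.one_le_exp hFθ0
      have hFm2 : 0 ≤ F/m2 := div_nonneg hF0 hm2.le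
      have hFm : 0 ≤ F/m := div_nonneg hF0 hmpos.le
      have hem2 : (0:ℝ) < Real.exp 1 + 1/m2 := by
        have : (0:ℝ) < 1/m2 := div_pos one_pos hm2
        linarith [Real.exp_pos 1]
      have hem2' : (0:ℝ) < Real.exp 1 + F/m2 := by linarith [Real.exp_pos 1]
      have hstep1 : Real.exp 1 + F/m ≤ (Real.exp 1 + F/m2) * Real.exp (c4*F^θ1) := by
        have h0 := mul_le_mul_of_nonneg_left hexp1 (Real.exp_pos 1).le
        linarith [hdiv1, hdiv2.le, hdiv2.ge]
      have hstep2 : Real.log (Real.exp 1 + F/m) ≤ Real.log (Real.exp 1 + F/m2) + c4*F^θ1 := by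
        calc Real.log (Real.exp 1 + F/m) ≤ Real.log ((Real.exp 1 + F/m2) * Real.exp (c4*F^θ1)) :=
            Real.log_le_log (by linarith [Real.exp_pos 1]) hstep1
          _ = _ := by rw [Real.log_mul hem2'.ne' (Real.exp_ne_zero _), Real.log_exp]
      have hstep3 : Real.log (Real.exp 1 + F/m2) ≤ Real.log (Real.exp 1 + 1/m2) + Real.log (1+F) := by
        have hineq : Real.exp 1 + F/m2 ≤ (Real.exp 1 + 1/m2) * (1+F) := by
          have h0 : (0:ℝ) < 1/m2 := div_pos one_pos hm2
          have he := Real.exp_pos 1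
          have hFm2' : F/m2 = 1/m2 * F := by ring
          have he1 : 0 ≤ Real.exp 1 * F := mul_nonneg he.le hF0
          have hex : (Real.exp 1 + 1/m2) * (1+F) =
              Real.exp 1 + Real.exp 1 * F + 1/m2 + 1/m2 * F := by ring
          linarith
        calc Real.log (Real.exp 1 + F/m2) ≤ Real.log ((Real.exp 1 + 1/m2) * (1+F)) :=
            Real.log_le_log hem2' hineq
          _ = _ := by rw [Real.log_mul hem2.ne' hFpos1.ne']
      have hstep4 : Real.log (1+F) ≤ (1+F)^θ1 / θ1 := by
        have h := Real.log_rpow hFpos1 θ1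
        have h2 : Real.log ((1+F)^θ1) ≤ (1+F)^θ1 := Real.log_le_self (by positivity)
        rw [h] at h2
        rw [le_div_iff₀ hθ1]
        linarith [mul_comm θ1 (Real.log (1+F))]
      have hF1F : F ^ θ1 ≤ (1+F)^θ1 := Real.rpow_le_rpow hF0 (by linarith) hθ1.le
      have hAP : Real.log (Real.exp 1 + 1/m2) ≤ Real.log (Real.exp 1 + 1/m2) * (1+F)^θ1 := by
        have := mul_le_mul_of_nonneg_left h1F (by linarith : (0:ℝ) ≤ Real.log (Real.exp 1 + 1/m2))
        linarith
      have hc4P : c4 * F^θ1 ≤ c4 * (1+F)^θ1 := mul_le_mul_of_nonneg_left hF1F hc4.le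
      rw [hC5_def]
      have hPθ : (1+F)^θ1/θ1 = 1/θ1 * (1+F)^θ1 := by ring
      rw [add_mul, add_mul]
      linarith
  -- bound on the exponent
  have hexpE : Real.exp (C1 * (1+F) * Real.log (Real.exp 1 + F/m)) ≤ Real.exp (c8' * L^e0) := by
    apply Real.exp_le_exp.2
    have h1 : C1 * (1+F) * Real.log (Real.exp 1 + F/m) ≤ C1 * (1+F) * (C5 * (1+F)^θ1) := by
      apply mul_le_mul_of_nonneg_left hlogbound
      exact mul_nonneg hC1.le hFpos1.le
    have h2 : C1 * (1+F) * (C5*(1+F)^θ1) = C1 * C5 * (1+F)^(1+θ1) := by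
      rw [Real.rpow_add hFpos1, Real.rpow_one]; ring
    have h3 : (1+F) ^ (1+θ1) ≤ (2*K*L^(1/θ2)) ^ (1+θ1) := by
      apply Real.rpow_le_rpow hFpos1.le _ (by linarith)
      linarith
    have h4 : (2*K*L^(1/θ2))^(1+θ1) = (2*K)^(1+θ1) * L ^ e0 := by
      rw [show 2*K*L^(1/θ2) = (2*K) * L^(1/θ2) from rfl,
        Real.mul_rpow h2K.le hLθ0, ← Real.rpow_mul hL0]
      congr 1
      rw [he0_def]; ring
    calc C1 * (1+F) * Real.log (Real.exp 1 + F/m) ≤ C1 * C5 * (1+F)^(1+θ1) := by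
          rw [← h2]; exact h1
      _ ≤ C1 * C5 * ((2*K)^(1+θ1) * L ^ e0) := by
          rw [← h4]
          exact mul_le_mul_of_nonneg_left h3 (mul_pos hC1 hC5pos).le
      _ = c8' * L^e0 := by rw [hc8'_def]; ring
  -- final assembly
  have hL_e0 : L ≤ L ^ e0 := by
    calc L = L ^ (1:ℝ) := (Real.rpow_one L).symm
      _ ≤ L ^ e0 := Real.rpow_le_rpow_of_exponent_le hL1 he0
  have hbig : C1 * g⁻¹^d * (Ψ g)⁻¹^2 ≤
      (C1 * a⁻¹^d * (k2/Ψ 1 * a⁻¹^β2)^2) *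
        Real.exp ((d:ℝ)*(L/α1) + (β2*(L/α1) + β2*(L/α1))) := by
    calc C1 * g⁻¹^d * (Ψ g)⁻¹^2
        ≤ C1 * (a⁻¹^d * Real.exp ((d:ℝ)*(L/α1))) *
            ((k2/Ψ 1 * a⁻¹^β2)^2 * Real.exp (β2*(L/α1)+β2*(L/α1))) := by
          apply mul_le_mul (mul_le_mul_of_nonneg_left hpow_d hC1.le) hΨsq (by positivity)
          exact mul_nonneg hC1.le (by positivity)
      _ = (C1 * a⁻¹^d * (k2/Ψ 1 * a⁻¹^β2)^2) *
            (Real.exp ((d:ℝ)*(L/α1)) * Real.exp (β2*(L/α1)+β2*(L/α1))) := by ring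
      _ = _ := by rw [← Real.exp_add]
  have hfinal : (d:ℝ)*(L/α1) + (β2*(L/α1) + β2*(L/α1)) + c8'*L^e0 ≤
      (((d:ℝ) + 2*β2)/α1 + c8') * L^e0 := by
    have hD : (d:ℝ)*(L/α1) + (β2*(L/α1) + β2*(L/α1)) = (((d:ℝ)+2*β2)/α1) * L := by ring
    have hcoef : (0:ℝ) ≤ ((d:ℝ)+2*β2)/α1 :=
      div_nonneg (by positivity) hα1.le
    have hkey : (((d:ℝ)+2*β2)/α1) * L ≤ (((d:ℝ)+2*β2)/α1) * L^e0 :=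
      mul_le_mul_of_nonneg_left hL_e0 hcoef
    rw [hD, add_mul]; linarith
  calc C1 * g⁻¹ ^ d * (Ψ g)⁻¹ ^ 2 * Real.exp (C1 * (1 + F) * Real.log (Real.exp 1 + F / m))
      ≤ ((C1 * a⁻¹^d * (k2/Ψ 1 * a⁻¹^β2)^2) *
          Real.exp ((d:ℝ)*(L/α1) + (β2*(L/α1) + β2*(L/α1)))) * Real.exp (c8' * L^e0) :=
        mul_le_mul hbig hexpE (Real.exp_pos _).le
          (mul_nonneg hc7pos.le (Real.exp_pos _).le)
    _ = (C1 * a⁻¹^d * (k2/Ψ 1 * a⁻¹^β2)^2) *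
          Real.exp ((d:ℝ)*(L/α1) + (β2*(L/α1) + β2*(L/α1)) + c8'*L^e0) := by
        rw [mul_assoc, ← Real.exp_add]
    _ ≤ (C1 * a⁻¹^d * (k2/Ψ 1 * a⁻¹^β2)^2) *
          Real.exp ((((d:ℝ) + 2*β2)/α1 + c8') * L^e0) :=
        mul_le_mul_of_nonneg_left (Real.exp_le_exp.2 hfinal) hc7pos.le
end
end

section
/- Let θ > 1 and c1, c2 > 0, and define β(s) = c1 exp( c2 s^{−1/θ} log(e + 1/s) ) for s > 0, with generalized inverse β⁻¹(r) = inf{ s > 0 : β(s) ≤ r } for r > 0. Then for every t > c1, the integral ∫_t^∞ β⁻¹(r) r^{−1} dr is finite. -/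
open MeasureTheory Set Real Filter Topology

noncomputable section

theorem statement19 (θ c1 c2 : ℝ) (hθ : 1 < θ) (hc1 : 0 < c1) (hc2 : 0 < c2) :
    ∀ t : ℝ, c1 < t →
      IntegrableOn
        (fun r : ℝ =>
          sInf {s : ℝ | 0 < s ∧
            c1 * Real.exp (c2 * s ^ (-(1 / θ)) * Real.log (Real.exp 1 + 1 / s)) ≤ r} / r)
        (Ioi t) volume := by
  intro t ht
  have hθ0 : (0:ℝ) < θ := by linarith
  have ht0 : (0:ℝ) < t := hc1.trans ht
  set ψ : ℝ → ℝ := fun s => c2 * s ^ (-(1 / θ)) * Real.log (Real.exp 1 + 1 / s) with hψ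
  set S : ℝ → Set ℝ := fun r => {s : ℝ | 0 < s ∧ c1 * Real.exp (ψ s) ≤ r} with hSdef
  have hmemS : ∀ (r s : ℝ), s ∈ S r ↔ (0 < s ∧ c1 * Real.exp (ψ s) ≤ r) := fun r s => Iff.rfl
  set θ' : ℝ := (1 + θ) / 2 with hθ'def
  have hθ'1 : 1 < θ' := by rw [hθ'def]; linarith
  have hθ'θ : θ' < θ := by rw [hθ'def]; linarith
  have hθ'0 : (0:ℝ) < θ' := by linarith
  set ε : ℝ := 1 / θ' - 1 / θ with hεdef
  have hε : 0 < ε := by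
    have := one_div_lt_one_div_of_lt hθ'0 hθ'θ
    rw [hεdef]; linarith
  set C : ℝ := c2 / ε * (Real.exp 1 + 1) ^ ε with hCdef
  have hEpos : (0:ℝ) < Real.exp 1 + 1 := by positivity
  have hC : 0 < C := mul_pos (div_pos hc2 hε) (Real.rpow_pos_of_pos hEpos ε)
  -- Claim A : on (0,1], ψ s ≤ C * s ^ (-(1/θ'))
  have claimA : ∀ s : ℝ, 0 < s → s ≤ 1 → ψ s ≤ C * s ^ (-(1/θ')) := by
    intro s hs hs1
    have hy : 0 < Real.exp 1 + 1 / s := by positivity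
    have hlog : Real.log (Real.exp 1 + 1 / s) ≤ (Real.exp 1 + 1 / s) ^ ε / ε := by
      have h1 := Real.log_rpow hy ε
      have h2 : Real.log ((Real.exp 1 + 1/s) ^ ε) ≤ (Real.exp 1 + 1/s) ^ ε := by
        have := Real.log_le_sub_one_of_pos (Real.rpow_pos_of_pos hy ε)
        linarith
      rw [h1] at h2
      rw [le_div_iff₀ hε]
      linarith [h2]
    have hb : (Real.exp 1 + 1/s) ^ ε ≤ (Real.exp 1 + 1) ^ ε * s ^ (-ε) := by
      have h1 : Real.exp 1 + 1/s ≤ (Real.exp 1 + 1) / s := by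
        rw [add_div]
        have he : Real.exp 1 ≤ Real.exp 1 / s := by
          rw [le_div_iff₀ hs]
          exact mul_le_of_le_one_right (Real.exp_pos 1).le hs1
        linarith
      calc (Real.exp 1 + 1/s) ^ ε ≤ ((Real.exp 1 + 1) / s) ^ ε :=
            Real.rpow_le_rpow hy.le h1 hε.le
        _ = (Real.exp 1 + 1) ^ ε * s ^ (-ε) := by
            rw [Real.div_rpow hEpos.le hs.le, Real.rpow_neg hs.le, div_eq_mul_inv]
    have hsp : (0:ℝ) < s ^ (-(1/θ)) := Real.rpow_pos_of_pos hs _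
    have hsplit : s ^ (-(1/θ')) = s ^ (-(1/θ)) * s ^ (-ε) := by
      rw [← Real.rpow_add hs]
      congr 1
      rw [hεdef]; ring
    calc ψ s ≤ c2 * s ^ (-(1/θ)) * ((Real.exp 1 + 1) ^ ε * s ^ (-ε) / ε) := by
          apply mul_le_mul_of_nonneg_left _ (by positivity)
          refine hlog.trans ?_
          gcongr
      _ = C * s ^ (-(1/θ')) := by
          rw [hsplit, hCdef]
          field_simp
  -- the threshold r0
  set r0 : ℝ := max t (c1 * Real.exp (max C 1)) with hr0def
  have htr0 : t ≤ r0 := le_max_left _ _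
  -- Claim B : for r > r0, (C/L)^θ' ∈ S r
  have claimB : ∀ r : ℝ, r0 < r →
      (C / Real.log (r / c1)) ^ θ' ∈ S r ∧ 1 ≤ Real.log (r/c1) := by
    intro r hr
    have hrpos : 0 < r := ht0.trans_le (htr0.trans hr.le)
    have hrc1 : Real.exp (max C 1) < r / c1 := by
      rw [lt_div_iff₀ hc1]
      have h := (le_max_right t (c1 * Real.exp (max C 1))).trans_lt hr
      linarith [h]
    have hLgt : max C 1 < Real.log (r / c1) := by
      rw [← Real.log_exp (max C 1)]
      exact Real.log_lt_log (Real.exp_pos _) hrc1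
    set L : ℝ := Real.log (r / c1) with hLdef
    have hL1 : 1 ≤ L := le_of_lt (lt_of_le_of_lt (le_max_right C 1) hLgt)
    have hLC : C ≤ L := le_of_lt (lt_of_le_of_lt (le_max_left C 1) hLgt)
    have hL0 : 0 < L := by linarith
    have hs0pos : 0 < (C / L) ^ θ' := Real.rpow_pos_of_pos (div_pos hC hL0) _
    have hs0le1 : (C / L) ^ θ' ≤ 1 :=
      Real.rpow_le_one (div_nonneg hC.le hL0.le) ((div_le_one hL0).mpr hLC) hθ'0.le
    have hinv : ((C / L) ^ θ') ^ (-(1/θ')) = L / C := by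
      rw [← Real.rpow_mul (div_nonneg hC.le hL0.le)]
      have h1 : θ' * (-(1/θ')) = -1 := by field_simp
      rw [h1, Real.rpow_neg_one, inv_div]
    have hψle : ψ ((C/L)^θ') ≤ L := by
      have h := claimA _ hs0pos hs0le1
      rw [hinv] at h
      calc ψ ((C/L)^θ') ≤ C * (L / C) := h
        _ = L := by field_simp
    refine ⟨⟨hs0pos, ?_⟩, hL1⟩
    calc c1 * Real.exp (ψ ((C/L)^θ')) ≤ c1 * Real.exp L := by
          exact mul_le_mul_of_nonneg_left (Real.exp_le_exp.mpr hψle) hc1.le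
      _ = r := by
          rw [hLdef, Real.exp_log (by positivity)]
          field_simp
  -- existence of a uniform element s* of S r for r ≥ t
  have hψ0 : Tendsto ψ atTop (𝓝 0) := by
    have h1 : Tendsto (fun s : ℝ => c2 * s ^ (-(1/θ))) atTop (𝓝 0) := by
      simpa using (tendsto_rpow_neg_atTop (by positivity : (0:ℝ) < 1/θ)).const_mul c2
    have h3 : Tendsto (fun s : ℝ => Real.exp 1 + 1 / s) atTop (𝓝 (Real.exp 1)) := by
      have := tendsto_inv_atTop_zero (𝕜 := ℝ)
      simpa [one_div] using tendsto_const_nhds.add this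
    have h2 : Tendsto (fun s : ℝ => Real.log (Real.exp 1 + 1 / s)) atTop (𝓝 1) := by
      have := ((Real.continuousAt_log (Real.exp_pos 1).ne').tendsto).comp h3
      simpa [Function.comp_def, Real.log_exp] using this
    have := h1.mul h2
    simpa [hψ] using this
  have hLt : 0 < Real.log (t / c1) := Real.log_pos ((one_lt_div hc1).mpr ht)
  obtain ⟨sstar, hsstar_pos, hsstar⟩ : ∃ s : ℝ, 0 < s ∧ ψ s ≤ Real.log (t / c1) := by
    have hev := hψ0.eventually (gt_mem_nhds hLt)
    obtain ⟨s, hs1, hs2⟩ := (hev.and (eventually_gt_atTop 0)).exists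
    exact ⟨s, hs2, hs1.le⟩
  have hsstarS : ∀ r : ℝ, t ≤ r → sstar ∈ S r := by
    intro r hr
    refine ⟨hsstar_pos, ?_⟩
    calc c1 * Real.exp (ψ sstar) ≤ c1 * Real.exp (Real.log (t / c1)) :=
          mul_le_mul_of_nonneg_left (Real.exp_le_exp.mpr hsstar) hc1.le
      _ = t := by rw [Real.exp_log (by positivity)]; field_simp
      _ ≤ r := hr
  -- basic facts about sInf
  have hbdd : ∀ r : ℝ, BddBelow (S r) := fun r => ⟨0, fun s hs => hs.1.le⟩
  have hne : ∀ r : ℝ, t ≤ r → (S r).Nonempty := fun r hr => ⟨sstar, hsstarS r hr⟩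
  have hnonneg : ∀ r : ℝ, t ≤ r → 0 ≤ sInf (S r) := fun r hr =>
    le_csInf (hne r hr) fun s hs => hs.1.le
  have hle : ∀ r : ℝ, t ≤ r → ∀ s ∈ S r, sInf (S r) ≤ s := fun r hr s hs =>
    csInf_le (hbdd r) hs
  -- measurability
  have hanti : Antitone (fun r : ℝ => sInf (S (max r t))) := by
    intro r1 r2 h12
    refine csInf_le_csInf (hbdd _) (hne _ (le_max_right _ _)) ?_
    intro s hs
    exact ⟨hs.1, hs.2.trans (max_le_max h12 le_rfl)⟩
  have hmeas : Measurable (fun r : ℝ => sInf (S (max r t)) / r) :=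
    hanti.measurable.div measurable_id
  have haesm : AEStronglyMeasurable (fun r : ℝ => sInf (S r) / r)
      (volume.restrict (Ioi t)) := by
    refine hmeas.aestronglyMeasurable.congr ?_
    filter_upwards [ae_restrict_mem measurableSet_Ioi] with r hr
    rw [max_eq_left (le_of_lt hr)]
  -- Part 1 : integrability on (t, r0]
  have hpart1 : IntegrableOn (fun r : ℝ => sInf (S r) / r) (Ioc t r0) volume := by
    have hconst : IntegrableOn (fun _ : ℝ => sstar / t) (Ioc t r0) volume :=
      integrableOn_const measure_Ioc_lt_top.ne
    refine hconst.mono' (haesm.mono_measure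
      (Measure.restrict_mono Ioc_subset_Ioi_self le_rfl)) ?_
    filter_upwards [ae_restrict_mem measurableSet_Ioc] with r hr
    have hrpos : 0 < r := ht0.trans hr.1
    rw [Real.norm_eq_abs, abs_of_nonneg (div_nonneg (hnonneg r hr.1.le) hrpos.le)]
    exact div_le_div₀ hsstar_pos.le (hle r hr.1.le sstar (hsstarS r hr.1.le)) ht0 hr.1.le
  -- Part 2 : integrability on (r0, ∞)
  have hr0c1 : c1 * Real.exp 1 ≤ r0 := by
    refine le_trans ?_ (le_max_right _ _)
    exact mul_le_mul_of_nonneg_left (Real.exp_le_exp.mpr (le_max_right C 1)) hc1.le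
  have hc1r0 : c1 < r0 := by
    have h1 : c1 < c1 * Real.exp 1 := by
      nlinarith [Real.exp_one_gt_d9]
    linarith
  have hbase : IntegrableOn (fun r : ℝ => Real.log (r / c1) ^ (-θ') / r) (Ioi r0) volume := by
    have hLfact : ∀ x : ℝ, x ∈ Ici r0 → 1 ≤ Real.log (x / c1) := by
      intro x hx
      have hx0 : r0 ≤ x := hx
      have h1 : Real.exp 1 ≤ x / c1 := by
        rw [le_div_iff₀ hc1]
        nlinarith [hr0c1]
      calc (1:ℝ) = Real.log (Real.exp 1) := (Real.log_exp 1).symm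
        _ ≤ Real.log (x / c1) := Real.log_le_log (Real.exp_pos 1) h1
    refine integrableOn_Ioi_deriv_of_nonneg'
      (g := fun r => -(θ' - 1)⁻¹ * Real.log (r / c1) ^ (1 - θ'))
      (fun x hx => ?_) (fun x hx => ?_) (l := 0) ?_
    · have hx0 : 0 < x := lt_of_lt_of_le (hc1.trans hc1r0) hx
      have hL1 : 1 ≤ Real.log (x / c1) := hLfact x hx
      have hLne : Real.log (x / c1) ≠ 0 := by linarith
      have d1 : HasDerivAt (fun r : ℝ => r / c1) (1 / c1) x := by
        simpa using (hasDerivAt_id x).div_const c1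
      have d2 : HasDerivAt (fun r : ℝ => Real.log (r / c1)) (x⁻¹) x := by
        have hne0 : x / c1 ≠ 0 := by positivity
        have := (Real.hasDerivAt_log hne0).comp x d1
        refine this.congr_deriv ?_
        rw [one_div, ← mul_inv, div_mul_cancel₀ x hc1.ne']
      have d3 : HasDerivAt (fun r : ℝ => Real.log (r / c1) ^ (1 - θ'))
          (x⁻¹ * (1 - θ') * Real.log (x / c1) ^ (1 - θ' - 1)) x :=
        d2.rpow_const (Or.inl hLne)
      have d4 := d3.const_mul (-(θ' - 1)⁻¹)
      refine d4.congr_deriv ?_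
      rw [show (1 : ℝ) - θ' - 1 = -θ' by ring]
      have hne' : θ' - 1 ≠ 0 := by linarith
      field_simp
      ring
    · have hx0 : 0 < x := lt_of_lt_of_le (hc1.trans hc1r0) hx.le
      have hL1 : 1 ≤ Real.log (x / c1) := hLfact x (mem_Ici.mpr (le_of_lt hx))
      exact div_nonneg (Real.rpow_nonneg (by linarith) _) hx0.le
    · have hLtop : Tendsto (fun r : ℝ => Real.log (r / c1)) atTop atTop :=
        Real.tendsto_log_atTop.comp (Tendsto.atTop_div_const hc1 tendsto_id)
      have hpow : Tendsto (fun y : ℝ => y ^ (1 - θ')) atTop (𝓝 0) := by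
        have := tendsto_rpow_neg_atTop (show (0:ℝ) < θ' - 1 by linarith)
        simpa [show -(θ' - 1) = 1 - θ' by ring] using this
      have := (hpow.comp hLtop).const_mul (-(θ' - 1)⁻¹)
      simpa [Function.comp] using this
  have hpart2 : IntegrableOn (fun r : ℝ => sInf (S r) / r) (Ioi r0) volume := by
    refine (hbase.const_mul (C ^ θ')).mono' (haesm.mono_measure
      (Measure.restrict_mono (Ioi_subset_Ioi htr0) le_rfl)) ?_
    filter_upwards [ae_restrict_mem measurableSet_Ioi] with r hr
    obtain ⟨hs0mem, hL1⟩ := claimB r hr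
    have htr : t < r := htr0.trans_lt hr
    have hrpos : 0 < r := ht0.trans htr
    have hL0 : 0 < Real.log (r / c1) := by linarith
    rw [Real.norm_eq_abs, abs_of_nonneg (div_nonneg (hnonneg r htr.le) hrpos.le)]
    have h1 : sInf (S r) / r ≤ (C / Real.log (r / c1)) ^ θ' / r := by
      gcongr
      exact hle r htr.le _ hs0mem
    refine h1.trans (le_of_eq ?_)
    rw [Real.div_rpow hC.le hL0.le, Real.rpow_neg hL0.le]
    ring
  have final : IntegrableOn (fun r : ℝ => sInf (S r) / r) (Ioi t) volume := by
    rw [← Ioc_union_Ioi_eq_Ioi htr0]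
    exact hpart1.union hpart2
  simpa only [hSdef, hψ] using final
end
end
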